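/- The I-projection preserves support: if 𝒞(P_1,Q_1) and 𝒞(P_2,Q_2) are geometrically equivalent and S ∈ 𝒞(P_1,Q_1), then supp(I_proj(S)) = supp(S), where I_proj(S) is the I-projection of S onto 𝒞(P_2,Q_2). -/

import Mathlib

open Finset Filter Topology

def IsProbVec {n : ℕ} (P : Fin n → ℝ) : Prop :=
  (∀ i, 0 ≤ P i) ∧ ∑ i, P i = 1

def supp {α : Type*} (P : α → ℝ) : Set α := {i | 0 < P i}

def supp2 {n m : ℕ} (S : Fin n → Fin m → ℝ) : Set (Fin n × Fin m) :=
  {p | 0 < S p.1 p.2}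

def Coupling {n m : ℕ} (P : Fin n → ℝ) (Q : Fin m → ℝ) : Set (Fin n → Fin m → ℝ) :=
  {S | (∀ i j, 0 ≤ S i j) ∧ (∀ i, ∑ j, S i j = P i) ∧ (∀ j, ∑ i, S i j = Q j)}

/-- Kullback-Leibler divergence of bivariate distributions, as a real-valued sum
(valid, with the convention `0 log 0 = 0`, whenever `supp2 T ⊆ supp2 S`). -/
noncomputable def D2 {n m : ℕ} (T S : Fin n → Fin m → ℝ) : ℝ :=
  ∑ i, ∑ j, T i j * Real.log (T i j / S i j)

/-- `T'` is an I-projection of `S` onto `𝒯`: it is absolutely continuous w.r.t. `S`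
(equivalently, `D(T'‖S) < ∞`) and minimizes the divergence among all such elements of `𝒯`
(elements with `¬ supp2 T ⊆ supp2 S` have infinite divergence). -/
def IsIProj {n m : ℕ} (S : Fin n → Fin m → ℝ) (𝒯 : Set (Fin n → Fin m → ℝ))
    (T' : Fin n → Fin m → ℝ) : Prop :=
  T' ∈ 𝒯 ∧ supp2 T' ⊆ supp2 S ∧ ∀ T ∈ 𝒯, supp2 T ⊆ supp2 S → D2 T' S ≤ D2 T S

noncomputable def prodDist {n m : ℕ} (P : Fin n → ℝ) (Q : Fin m → ℝ) :
    Fin n → Fin m → ℝ := fun i j => P i * Q j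

/-- KL divergence of univariate distributions. -/
noncomputable def Dv {n : ℕ} (P Q : Fin n → ℝ) : ℝ :=
  ∑ i, P i * Real.log (P i / Q i)

def GeomEquiv {n m : ℕ} (C1 C2 : Set (Fin n → Fin m → ℝ)) : Prop :=
  (∀ S ∈ C1, ∃ T ∈ C2, supp2 T = supp2 S) ∧ (∀ T ∈ C2, ∃ S ∈ C1, supp2 S = supp2 T)

lemma xlog_div (s : ℝ) (hs : 0 < s) (x : ℝ) (hx : 0 ≤ x) :
    x * Real.log (x / s) = x * Real.log x - x * Real.log s := by
  rcases eq_or_lt_of_le hx with h | h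
  · simp [← h]
  · rw [Real.log_div h.ne' hs.ne', mul_sub]

lemma conv_ineq (s a b ε : ℝ) (hs : 0 < s) (ha : 0 ≤ a) (hb : 0 ≤ b)
    (hε : 0 ≤ ε) (hε1 : ε ≤ 1) :
    ((1 - ε) * a + ε * b) * Real.log (((1 - ε) * a + ε * b) / s) ≤
      (1 - ε) * (a * Real.log (a / s)) + ε * (b * Real.log (b / s)) := by
  have hu : 0 ≤ (1 - ε) * a + ε * b := by
    have := mul_nonneg (by linarith : (0:ℝ) ≤ 1 - ε) ha
    have := mul_nonneg hε hb
    linarith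
  have key := Real.convexOn_mul_log.2 (Set.mem_Ici.2 ha) (Set.mem_Ici.2 hb)
    (by linarith : (0:ℝ) ≤ 1 - ε) hε (by ring)
  simp only [smul_eq_mul] at key
  rw [xlog_div s hs _ hu, xlog_div s hs a ha, xlog_div s hs b hb]
  nlinarith [key]

theorem stmt12 {n m : ℕ} (P₁ P₂ : Fin n → ℝ) (Q₁ Q₂ : Fin m → ℝ)
    (hP₁ : IsProbVec P₁) (hQ₁ : IsProbVec Q₁) (hP₂ : IsProbVec P₂) (hQ₂ : IsProbVec Q₂)
    (hGE : GeomEquiv (Coupling P₁ Q₁) (Coupling P₂ Q₂))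
    (S Sstar : Fin n → Fin m → ℝ) (hS : S ∈ Coupling P₁ Q₁)
    (hproj : IsIProj S (Coupling P₂ Q₂) Sstar) :
    supp2 Sstar = supp2 S := by
  obtain ⟨hmem, hsub, hmin⟩ := hproj
  refine Set.Subset.antisymm hsub ?_
  intro p hp
  by_contra hns
  obtain ⟨hN1, hR1, hC1⟩ := hmem
  obtain ⟨T, hT, hTsupp⟩ := hGE.1 S hS
  obtain ⟨hN2, hR2, hC2⟩ := hT
  have hSstar0 : Sstar p.1 p.2 = 0 := le_antisymm (not_lt.1 hns) (hN1 _ _)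
  have hp' : (0:ℝ) < S p.1 p.2 := hp
  have hb₀ : 0 < T p.1 p.2 := by
    have : p ∈ supp2 T := by rw [hTsupp]; exact hp
    exact this
  set b₀ := T p.1 p.2 with hb₀def
  set Δ := D2 T S - D2 Sstar S with hΔdef
  set ε : ℝ := min (1/2) (Real.exp (-(Δ + 1) / b₀)) with hεdef
  have hε0 : 0 < ε := lt_min (by norm_num) (Real.exp_pos _)
  have hε1 : ε ≤ 1 := le_trans (min_le_left _ _) (by norm_num)
  have hεlt1 : ε < 1 := lt_of_le_of_lt (min_le_left _ _) (by norm_num)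
  have hlogε : b₀ * Real.log ε ≤ -(Δ + 1) := by
    have h1 : Real.log ε ≤ -(Δ + 1) / b₀ := by
      calc Real.log ε ≤ Real.log (Real.exp (-(Δ + 1) / b₀)) :=
            Real.log_le_log hε0 (min_le_right _ _)
        _ = -(Δ + 1) / b₀ := Real.log_exp _
    calc b₀ * Real.log ε ≤ b₀ * (-(Δ + 1) / b₀) := by
          exact mul_le_mul_of_nonneg_left h1 hb₀.le
      _ = -(Δ + 1) := by field_simp
  set Tε : Fin n → Fin m → ℝ := fun i j => (1 - ε) * Sstar i j + ε * T i j with hTεdef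
  -- support facts outside supp2 S
  have hSstar_zero : ∀ i j, ¬ 0 < S i j → Sstar i j = 0 := by
    intro i j h
    by_contra h'
    exact h (hsub (show ((i, j) : Fin n × Fin m) ∈ supp2 Sstar from lt_of_le_of_ne (hN1 i j) (Ne.symm h')))
  have hT_zero : ∀ i j, ¬ 0 < S i j → T i j = 0 := by
    intro i j h
    by_contra h'
    have : ((i, j) : Fin n × Fin m) ∈ supp2 T :=
      lt_of_le_of_ne (hN2 i j) (Ne.symm h')
    rw [hTsupp] at this
    exact h this
  have hTε_mem : Tε ∈ Coupling P₂ Q₂ := by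
    refine ⟨fun i j => ?_, fun i => ?_, fun j => ?_⟩
    · have := mul_nonneg (by linarith : (0:ℝ) ≤ 1 - ε) (hN1 i j)
      have := mul_nonneg hε0.le (hN2 i j)
      simp only [hTεdef]
      linarith
    · simp only [hTεdef, Finset.sum_add_distrib, ← Finset.mul_sum, hR1 i, hR2 i]
      ring
    · simp only [hTεdef, Finset.sum_add_distrib, ← Finset.mul_sum, hC1 j, hC2 j]
      ring
  have hTε_supp : supp2 Tε ⊆ supp2 S := by
    intro q hq
    by_contra h
    have h1 := hSstar_zero q.1 q.2 h
    have h2 := hT_zero q.1 q.2 h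
    have : Tε q.1 q.2 = 0 := by simp [hTεdef, h1, h2]
    exact absurd (show (0:ℝ) < Tε q.1 q.2 from hq) (by rw [this]; exact lt_irrefl 0)
  have hle := hmin Tε hTε_mem hTε_supp
  -- key estimate
  have hkey : D2 Tε S ≤ (1 - ε) * D2 Sstar S + ε * D2 T S + ε * (b₀ * Real.log ε) := by
    have hpt : ∀ i j, Tε i j * Real.log (Tε i j / S i j) ≤
        (1 - ε) * (Sstar i j * Real.log (Sstar i j / S i j)) +
        ε * (T i j * Real.log (T i j / S i j)) +
        (if i = p.1 then (if j = p.2 then ε * (b₀ * Real.log ε) else 0) else 0) := by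
      intro i j
      by_cases hq : (i, j) = p
      · have hi : i = p.1 := by rw [← hq]
        have hj : j = p.2 := by rw [← hq]
        subst hi; subst hj
        rw [if_pos rfl, if_pos rfl, hSstar0]
        have hlhs : Tε p.1 p.2 = ε * b₀ := by simp [hTεdef, hSstar0]; exact Or.inl rfl
        rw [hlhs]
        have hlog : Real.log (ε * b₀ / S p.1 p.2) = Real.log ε + Real.log (b₀ / S p.1 p.2) := by
          rw [mul_div_assoc, Real.log_mul hε0.ne' (div_pos hb₀ hp').ne']
        rw [hlog]
        exact le_of_eq (by ring)
      · have hif : (if i = p.1 then (if j = p.2 then ε * (b₀ * Real.log ε) else 0) else 0) = 0 := by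
          by_cases h1 : i = p.1
          · by_cases h2 : j = p.2
            · exact absurd (Prod.ext h1 h2) hq
            · simp [h1, h2]
          · simp [h1]
        rw [hif, add_zero]
        by_cases hs : 0 < S i j
        · exact conv_ineq _ _ _ _ hs (hN1 i j) (hN2 i j) hε0.le hε1
        · have h1 := hSstar_zero i j hs
          have h2 := hT_zero i j hs
          simp [hTεdef, h1, h2]
    have hsum : D2 Tε S ≤
        ∑ i, ∑ j, ((1 - ε) * (Sstar i j * Real.log (Sstar i j / S i j)) +
          ε * (T i j * Real.log (T i j / S i j)) +
          (if i = p.1 then (if j = p.2 then ε * (b₀ * Real.log ε) else 0) else 0)) := by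
      unfold D2
      exact Finset.sum_le_sum fun i _ => Finset.sum_le_sum fun j _ => hpt i j
    calc D2 Tε S ≤ _ := hsum
      _ = (1 - ε) * D2 Sstar S + ε * D2 T S + ε * (b₀ * Real.log ε) := by
          unfold D2
          simp only [Finset.sum_add_distrib, ← Finset.mul_sum, Finset.sum_ite_eq']
          simp
  -- conclude
  have hfin : D2 Sstar S ≤ D2 Tε S := hle
  have : ε * (D2 T S - D2 Sstar S + b₀ * Real.log ε) ≥ 0 := by nlinarith [hkey, hfin]
  have hneg : D2 T S - D2 Sstar S + b₀ * Real.log ε ≤ -1 := by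
    have : D2 T S - D2 Sstar S = Δ := by rw [hΔdef]
    linarith [hlogε]
  nlinarith [hε0, hneg, this]
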